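/- Let μ and ν be probability measures on a measurable space α and let κ and η be Markov kernels from α to a measurable space β such that the map x ↦ TV(κ(x), η(x)) is measurable. Then TV(μ ⊗ κ, ν ⊗ η) ≤ TV(μ, ν) + ∫ TV(κ(x), η(x)) dμ(x). -/

import Mathlib

open MeasureTheory ProbabilityTheory

/-- Total variation distance between two measures:
`TV(P,Q) = sup { |P(A) - Q(A)| : A measurable }`. -/
noncomputable def tvDist {α : Type*} [MeasurableSpace α] (P Q : Measure α) : ℝ :=
  ⨆ A : {s : Set α // MeasurableSet s}, |(P A.1).toReal - (Q A.1).toReal|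

lemma tvDist_bddAbove {α : Type*} [MeasurableSpace α] (P Q : Measure α)
    [IsProbabilityMeasure P] [IsProbabilityMeasure Q] :
    BddAbove (Set.range fun A : {s : Set α // MeasurableSet s} =>
      |(P A.1).toReal - (Q A.1).toReal|) := by
  refine ⟨1, ?_⟩
  rintro x ⟨A, rfl⟩
  have h1 : (P A.1).toReal ≤ 1 := by
    simpa using ENNReal.toReal_mono (by simp) (prob_le_one (μ := P) (s := A.1))
  have h2 : (Q A.1).toReal ≤ 1 := by
    simpa using ENNReal.toReal_mono (by simp) (prob_le_one (μ := Q) (s := A.1))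
  have h3 : 0 ≤ (P A.1).toReal := ENNReal.toReal_nonneg
  have h4 : 0 ≤ (Q A.1).toReal := ENNReal.toReal_nonneg
  rw [abs_sub_le_iff]
  constructor <;> linarith

lemma le_tvDist {α : Type*} [MeasurableSpace α] (P Q : Measure α)
    [IsProbabilityMeasure P] [IsProbabilityMeasure Q] {s : Set α} (hs : MeasurableSet s) :
    |(P s).toReal - (Q s).toReal| ≤ tvDist P Q :=
  le_ciSup (tvDist_bddAbove P Q) ⟨s, hs⟩

lemma tvDist_comm {α : Type*} [MeasurableSpace α] (P Q : Measure α) :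
    tvDist P Q = tvDist Q P := by
  simp only [tvDist, abs_sub_comm]

lemma tvDist_nonneg {α : Type*} [MeasurableSpace α] (P Q : Measure α)
    [IsProbabilityMeasure P] [IsProbabilityMeasure Q] : 0 ≤ tvDist P Q := by
  have := le_tvDist P Q MeasurableSet.empty
  simpa using (abs_nonneg _).trans this

lemma tvDist_le_one {α : Type*} [MeasurableSpace α] (P Q : Measure α)
    [IsProbabilityMeasure P] [IsProbabilityMeasure Q] : tvDist P Q ≤ 1 := by
  refine ciSup_le fun A => ?_
  have h1 : (P A.1).toReal ≤ 1 := by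
    simpa using ENNReal.toReal_mono (by simp) (prob_le_one (μ := P) (s := A.1))
  have h2 : (Q A.1).toReal ≤ 1 := by
    simpa using ENNReal.toReal_mono (by simp) (prob_le_one (μ := Q) (s := A.1))
  have h3 : 0 ≤ (P A.1).toReal := ENNReal.toReal_nonneg
  have h4 : 0 ≤ (Q A.1).toReal := ENNReal.toReal_nonneg
  rw [abs_sub_le_iff]
  constructor <;> linarith

lemma integrable_of_bounded {α : Type*} [MeasurableSpace α] (μ : Measure α)
    [IsFiniteMeasure μ] {f : α → ℝ} (hf : Measurable f) (h0 : ∀ x, 0 ≤ f x)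
    (h1 : ∀ x, f x ≤ 1) : Integrable f μ := by
  refine (integrable_const (1 : ℝ)).mono' hf.aestronglyMeasurable ?_
  filter_upwards with x
  rw [Real.norm_eq_abs, abs_of_nonneg (h0 x)]
  exact h1 x

lemma integral_sub_integral_le {α : Type*} [MeasurableSpace α] (μ ν : Measure α)
    [IsProbabilityMeasure μ] [IsProbabilityMeasure ν] {f : α → ℝ}
    (hf : Measurable f) (h0 : ∀ x, 0 ≤ f x) (h1 : ∀ x, f x ≤ 1) :
    ∫ x, f x ∂μ - ∫ x, f x ∂ν ≤ tvDist μ ν := by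
  obtain ⟨s, hs, hs1, hs2⟩ := MeasureTheory.hahn_decomposition (μ := μ) (ν := ν)
  have hμ : Integrable f μ := integrable_of_bounded μ hf h0 h1
  have hν : Integrable f ν := integrable_of_bounded ν hf h0 h1
  have hres1 : ν.restrict s ≤ μ.restrict s := by
    rw [Measure.le_iff]
    intro t ht
    rw [Measure.restrict_apply ht, Measure.restrict_apply ht]
    exact hs1 _ (ht.inter hs) Set.inter_subset_right
  have hres2 : μ.restrict sᶜ ≤ ν.restrict sᶜ := by
    rw [Measure.le_iff]
    intro t ht
    rw [Measure.restrict_apply ht, Measure.restrict_apply ht]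
    exact hs2 _ (ht.inter hs.compl) Set.inter_subset_right
  -- on sᶜ, ∫ f dμ ≤ ∫ f dν
  have hcompl : ∫ x in sᶜ, f x ∂μ ≤ ∫ x in sᶜ, f x ∂ν :=
    integral_mono_measure hres2 (Filter.Eventually.of_forall h0) hν.restrict
  -- on s, ∫ (1-f) dν ≤ ∫ (1-f) dμ
  have hone : ∫ x in s, (1 - f x) ∂ν ≤ ∫ x in s, (1 - f x) ∂μ :=
    integral_mono_measure hres1 (Filter.Eventually.of_forall fun x => by
      simp only [Pi.zero_apply]; linarith [h1 x])
      ((integrable_const 1).sub hμ).restrict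
  have expand : ∀ (ρ : Measure α) [IsFiniteMeasure ρ] (hρi : Integrable f ρ),
      ∫ x in s, (1 - f x) ∂ρ = (ρ s).toReal - ∫ x in s, f x ∂ρ := by
    intro ρ _ hρi
    rw [integral_sub (integrable_const 1).restrict hρi.restrict]
    simp [hs]
    rfl
  rw [expand ν hν, expand μ hμ] at hone
  have hson : ∫ x in s, f x ∂μ - ∫ x in s, f x ∂ν ≤ (μ s).toReal - (ν s).toReal := by
    linarith
  have hsplit : ∀ (ρ : Measure α) (hρi : Integrable f ρ),
      ∫ x, f x ∂ρ = ∫ x in s, f x ∂ρ + ∫ x in sᶜ, f x ∂ρ := by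
    intro ρ hρi
    rw [integral_add_compl hs hρi]
  rw [hsplit μ hμ, hsplit ν hν]
  have htv : (μ s).toReal - (ν s).toReal ≤ tvDist μ ν :=
    (le_abs_self _).trans (le_tvDist μ ν hs)
  linarith

lemma abs_integral_sub_integral_le {α : Type*} [MeasurableSpace α] (μ ν : Measure α)
    [IsProbabilityMeasure μ] [IsProbabilityMeasure ν] {f : α → ℝ}
    (hf : Measurable f) (h0 : ∀ x, 0 ≤ f x) (h1 : ∀ x, f x ≤ 1) :
    |∫ x, f x ∂μ - ∫ x, f x ∂ν| ≤ tvDist μ ν := by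
  rw [abs_sub_le_iff]
  exact ⟨integral_sub_integral_le μ ν hf h0 h1,
    (integral_sub_integral_le ν μ hf h0 h1).trans_eq (tvDist_comm ν μ)⟩

/-- For probability measures `μ, ν` on `α` and Markov kernels `κ, η` from
`α` to `β` (with `x ↦ TV(κ x, η x)` measurable),
`TV(μ ⊗ κ, ν ⊗ η) ≤ TV(μ, ν) + ∫ TV(κ x, η x) dμ(x)`. -/
theorem tvDist_compProd_le_add {α β : Type*} [MeasurableSpace α] [MeasurableSpace β]
    (μ ν : Measure α) [IsProbabilityMeasure μ] [IsProbabilityMeasure ν]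
    (κ η : Kernel α β) [IsMarkovKernel κ] [IsMarkovKernel η]
    (hmeas : Measurable fun x => tvDist (κ x) (η x)) :
    tvDist (μ ⊗ₘ κ) (ν ⊗ₘ η) ≤ tvDist μ ν + ∫ x, tvDist (κ x) (η x) ∂μ := by
  refine ciSup_le fun A => ?_
  obtain ⟨A, hA⟩ := A
  set f : α → ℝ := fun x => (κ x (Prod.mk x ⁻¹' A)).toReal with hf_def
  set g : α → ℝ := fun x => (η x (Prod.mk x ⁻¹' A)).toReal with hg_def
  have hfm : Measurable f := (Kernel.measurable_kernel_prodMk_left hA).ennreal_toReal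
  have hgm : Measurable g := (Kernel.measurable_kernel_prodMk_left hA).ennreal_toReal
  have hf0 : ∀ x, 0 ≤ f x := fun x => ENNReal.toReal_nonneg
  have hg0 : ∀ x, 0 ≤ g x := fun x => ENNReal.toReal_nonneg
  have hf1 : ∀ x, f x ≤ 1 := fun x => by
    simpa using ENNReal.toReal_mono (by simp) (prob_le_one (μ := κ x) (s := Prod.mk x ⁻¹' A))
  have hg1 : ∀ x, g x ≤ 1 := fun x => by
    simpa using ENNReal.toReal_mono (by simp) (prob_le_one (μ := η x) (s := Prod.mk x ⁻¹' A))
  have hκint : ((μ ⊗ₘ κ) A).toReal = ∫ x, f x ∂μ := by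
    rw [Measure.compProd_apply hA]
    rw [integral_toReal (Kernel.measurable_kernel_prodMk_left hA).aemeasurable
      (Filter.Eventually.of_forall fun x => (prob_le_one).trans_lt ENNReal.one_lt_top)]
  have hηint : ((ν ⊗ₘ η) A).toReal = ∫ x, g x ∂ν := by
    rw [Measure.compProd_apply hA]
    rw [integral_toReal (Kernel.measurable_kernel_prodMk_left hA).aemeasurable
      (Filter.Eventually.of_forall fun x => (prob_le_one).trans_lt ENNReal.one_lt_top)]
  rw [hκint, hηint]
  have step : |∫ x, f x ∂μ - ∫ x, g x ∂ν| ≤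
      |∫ x, f x ∂μ - ∫ x, g x ∂μ| + |∫ x, g x ∂μ - ∫ x, g x ∂ν| := abs_sub_le _ _ _
  refine step.trans ?_
  have h2 : |∫ x, g x ∂μ - ∫ x, g x ∂ν| ≤ tvDist μ ν :=
    abs_integral_sub_integral_le μ ν hgm hg0 hg1
  have hfint : Integrable f μ := integrable_of_bounded μ hfm hf0 hf1
  have hgint : Integrable g μ := integrable_of_bounded μ hgm hg0 hg1
  have htvint : Integrable (fun x => tvDist (κ x) (η x)) μ :=
    integrable_of_bounded μ hmeas (fun x => tvDist_nonneg _ _) (fun x => tvDist_le_one _ _)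
  have h1 : |∫ x, f x ∂μ - ∫ x, g x ∂μ| ≤ ∫ x, tvDist (κ x) (η x) ∂μ := by
    rw [← integral_sub hfint hgint]
    have habs : |∫ x, (f x - g x) ∂μ| ≤ ∫ x, |f x - g x| ∂μ := by
      simpa [Real.norm_eq_abs] using
        norm_integral_le_integral_norm (μ := μ) (f := fun x => f x - g x)
    refine habs.trans ?_
    refine integral_mono (hfint.sub hgint).abs htvint fun x => ?_
    exact le_tvDist (κ x) (η x) (measurable_prodMk_left hA)
  linarith
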